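/- The group ⟨x, y | xy = yx, y² = 1⟩ is isomorphic to ℤ × ℤ/2, while the group ⟨x, y | xy⁻¹ = yx⁻¹⟩ is isomorphic to the free product ℤ * ℤ/2. In particular these two groups are not isomorphic. -/

import Mathlib

open Multiplicative

section helpers
variable {G : Type*} [Group G]

lemma zsmul_ofMul (g : G) (k : ℤ) : k • Additive.ofMul g = Additive.ofMul (g ^ k) := rfl

lemma zmod2key (g : G) (h : g ^ 2 = 1) :
    (zmultiplesHom (Additive G)) (Additive.ofMul g) (((2:ℕ)):ℤ) = 0 := by
  rw [zmultiplesHom_apply, zsmul_ofMul]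
  have : g ^ (((2:ℕ)):ℤ) = 1 := by rw [zpow_natCast, h]
  rw [this]; rfl

def zmod2Hom (g : G) (h : g ^ 2 = 1) : Multiplicative (ZMod 2) →* G :=
  AddMonoidHom.toMultiplicativeLeft
    (ZMod.lift 2 ⟨(zmultiplesHom (Additive G)) (Additive.ofMul g), zmod2key g h⟩)

lemma zmod2Hom_apply_one (g : G) (h : g ^ 2 = 1) :
    zmod2Hom g h (ofAdd (1 : ZMod 2)) = g := by
  have h1 : (1 : ZMod 2) = (((1 : ℤ) : ZMod 2)) := by decide
  rw [zmod2Hom, h1]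
  have h2 := ZMod.lift_coe 2 ⟨(zmultiplesHom (Additive G)) (Additive.ofMul g), zmod2key g h⟩ 1
  calc AddMonoidHom.toMultiplicativeLeft _ (ofAdd (((1:ℤ) : ZMod 2)))
      = Additive.toMul ((ZMod.lift 2 ⟨(zmultiplesHom (Additive G)) (Additive.ofMul g),
          zmod2key g h⟩) (((1:ℤ) : ZMod 2))) := rfl
    _ = g := by rw [h2]; simp [zsmul_ofMul]

lemma zmod2cases : ∀ b : Multiplicative (ZMod 2), b = ofAdd 0 ∨ b = ofAdd 1 := by decide

lemma z2hom_ext {H : Type*} [Monoid H] {φ ψ : Multiplicative (ZMod 2) →* H} (h : φ (ofAdd 1) = ψ (ofAdd 1)) :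
    φ = ψ := by
  refine MonoidHom.ext fun b => ?_
  rcases zmod2cases b with rfl | rfl
  · simp only [ofAdd_zero, map_one]
  · exact h

lemma mk_rel_eq_one {α : Type*} {rels : Set (FreeGroup α)} {r : FreeGroup α} (h : r ∈ rels) :
    PresentedGroup.mk rels r = 1 :=
  (QuotientGroup.eq_one_iff _).2 (Subgroup.subset_normalClosure h)

end helpers


/-- Generators: `0 ↦ x`, `1 ↦ y`.  Relations: `xy = yx` and `y² = 1`. -/
def hopfW1Rels : Set (FreeGroup (Fin 2)) :=
  { FreeGroup.of 0 * FreeGroup.of 1 * (FreeGroup.of 1 * FreeGroup.of 0)⁻¹,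
    (FreeGroup.of 1) ^ 2 }

/-- Generators: `0 ↦ x`, `1 ↦ y`.  Relation: `xy⁻¹ = yx⁻¹`. -/
def hopfCoreRels : Set (FreeGroup (Fin 2)) :=
  { FreeGroup.of 0 * (FreeGroup.of 1)⁻¹ * (FreeGroup.of 1 * (FreeGroup.of 0)⁻¹)⁻¹ }

namespace stmt11aux

abbrev P := Multiplicative ℤ × Multiplicative (ZMod 2)
abbrev PG1 := PresentedGroup hopfW1Rels

noncomputable abbrev X : PG1 := PresentedGroup.of 0
noncomputable abbrev Y : PG1 := PresentedGroup.of 1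

lemma w1_comm : X * Y = Y * X := by
  have := mk_rel_eq_one (rels := hopfW1Rels)
    (r := FreeGroup.of 0 * FreeGroup.of 1 * (FreeGroup.of 1 * FreeGroup.of 0)⁻¹)
    (Set.mem_insert _ _)
  simp only [map_mul, map_inv] at this
  exact mul_inv_eq_one.mp this

lemma w1_y2 : Y ^ 2 = 1 := by
  have := mk_rel_eq_one (rels := hopfW1Rels) (r := (FreeGroup.of 1) ^ 2)
    (Set.mem_insert_of_mem _ rfl)
  rw [map_pow] at this
  exact this

def fW : Fin 2 → P := ![(ofAdd 1, 1), (1, ofAdd 1)]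

lemma fW_rels : ∀ r ∈ hopfW1Rels, FreeGroup.lift fW r = 1 := by
  intro r hr
  simp only [hopfW1Rels, Set.mem_insert_iff, Set.mem_singleton_iff] at hr
  rcases hr with rfl | rfl
  · simp only [map_mul, map_inv, FreeGroup.lift_apply_of, fW]
    rw [mul_inv_eq_one]
    exact mul_comm _ _
  · simp only [map_pow, FreeGroup.lift_apply_of, fW]
    decide

noncomputable def f1 : PG1 →* P := PresentedGroup.toGroup fW_rels

noncomputable def g1 : P →* PG1 :=
  MonoidHom.noncommCoprod (zpowersHom PG1 X) (zmod2Hom Y w1_y2) (by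
    intro m n
    have hc : Commute X Y := w1_comm
    rcases zmod2cases n with rfl | rfl
    · simp only [ofAdd_zero, map_one]; exact Commute.one_right _
    · rw [zmod2Hom_apply_one]
      simpa using (hc.zpow_left (toAdd m)))

lemma g1_comp_f1 : g1.comp f1 = MonoidHom.id PG1 := by
  apply PresentedGroup.ext
  intro x
  fin_cases x
  · show g1 (f1 (PresentedGroup.of 0)) = X
    rw [f1, PresentedGroup.toGroup.of]
    show g1 (ofAdd 1, 1) = X
    simp [g1, MonoidHom.noncommCoprod_apply]
  · show g1 (f1 (PresentedGroup.of 1)) = Y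
    rw [f1, PresentedGroup.toGroup.of]
    show g1 (1, ofAdd 1) = Y
    simp [g1, MonoidHom.noncommCoprod_apply, zmod2Hom_apply_one]

lemma prod_hom_ext {H : Type*} [Monoid H] {φ ψ : P →* H}
    (h1 : φ (ofAdd 1, 1) = ψ (ofAdd 1, 1)) (h2 : φ (1, ofAdd 1) = ψ (1, ofAdd 1)) :
    φ = ψ := by
  have e1 : φ.comp (MonoidHom.inl _ _) = ψ.comp (MonoidHom.inl _ _) :=
    MonoidHom.ext_mint (by simpa using h1)
  have e2 : φ.comp (MonoidHom.inr _ _) = ψ.comp (MonoidHom.inr _ _) := by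
    apply z2hom_ext; simpa using h2
  ext ⟨a, b⟩
  have : ((a, b) : P) = (MonoidHom.inl _ _ a) * (MonoidHom.inr _ _ b) := by
    simp
  rw [this, map_mul, map_mul]
  rw [show φ (MonoidHom.inl _ _ a) = ψ (MonoidHom.inl _ _ a) from DFunLike.congr_fun e1 a,
    show φ (MonoidHom.inr _ _ b) = ψ (MonoidHom.inr _ _ b) from DFunLike.congr_fun e2 b]

lemma f1_comp_g1 : f1.comp g1 = MonoidHom.id P := by
  apply prod_hom_ext
  · show f1 (g1 (ofAdd 1, 1)) = _
    simp [g1, MonoidHom.noncommCoprod_apply, f1, PresentedGroup.toGroup.of, fW]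
  · show f1 (g1 (1, ofAdd 1)) = _
    simp [g1, MonoidHom.noncommCoprod_apply, zmod2Hom_apply_one, f1,
      PresentedGroup.toGroup.of, fW]

noncomputable def e1 : PG1 ≃* P := MonoidHom.toMulEquiv f1 g1 g1_comp_f1 f1_comp_g1


-- Part 2: the core group
abbrev Q := Monoid.Coprod (Multiplicative ℤ) (Multiplicative (ZMod 2))
abbrev PG2 := PresentedGroup hopfCoreRels

noncomputable abbrev X2 : PG2 := PresentedGroup.of 0
noncomputable abbrev Y2 : PG2 := PresentedGroup.of 1

lemma core_rel : X2 * Y2⁻¹ * X2 * Y2⁻¹ = 1 := by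
  have := mk_rel_eq_one (rels := hopfCoreRels)
    (r := FreeGroup.of 0 * (FreeGroup.of 1)⁻¹ * (FreeGroup.of 1 * (FreeGroup.of 0)⁻¹)⁻¹) rfl
  simp only [map_mul, map_inv, mul_inv_rev, inv_inv] at this
  exact this

noncomputable abbrev Z : PG2 := X2 * Y2⁻¹

lemma core_z2 : Z ^ 2 = 1 := by
  have := core_rel
  rw [pow_two]
  calc X2 * Y2⁻¹ * (X2 * Y2⁻¹) = X2 * Y2⁻¹ * X2 * Y2⁻¹ := by group
    _ = 1 := core_rel

lemma zx_eq_y : Z * X2 = Y2 := by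
  have h1 : X2 * Y2⁻¹ * X2 = Y2 := mul_inv_eq_one.mp core_rel
  exact h1

def fC : Fin 2 → Q := ![Monoid.Coprod.inl (ofAdd (1:ℤ)),
  Monoid.Coprod.inr (ofAdd (1:ZMod 2)) * Monoid.Coprod.inl (ofAdd (1:ℤ))]

lemma inr_sq : (Monoid.Coprod.inr (ofAdd (1:ZMod 2)) : Q) ^ 2 = 1 := by
  rw [← map_pow]
  have : (ofAdd (1:ZMod 2)) ^ 2 = 1 := by decide
  rw [this, map_one]

lemma fC_rels : ∀ r ∈ hopfCoreRels, FreeGroup.lift fC r = 1 := by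
  intro r hr
  simp only [hopfCoreRels, Set.mem_singleton_iff] at hr
  subst hr
  simp only [map_mul, map_inv, FreeGroup.lift_apply_of, fC]
  have h2 := inr_sq
  rw [pow_two] at h2
  set A : Q := Monoid.Coprod.inl (ofAdd (1:ℤ))
  set B : Q := Monoid.Coprod.inr (ofAdd (1:ZMod 2))
  show A * (B * A)⁻¹ * (B * A * A⁻¹)⁻¹ = 1
  have hB : B⁻¹ = B := by
    rw [inv_eq_iff_mul_eq_one]; exact h2
  calc A * (B * A)⁻¹ * (B * A * A⁻¹)⁻¹ = B⁻¹ * B⁻¹ := by group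
    _ = B * B := by rw [hB]
    _ = 1 := h2

noncomputable def f2 : PG2 →* Q := PresentedGroup.toGroup fC_rels

noncomputable def g2 : Q →* PG2 :=
  Monoid.Coprod.lift (zpowersHom PG2 X2) (zmod2Hom Z core_z2)

lemma g2_comp_f2 : g2.comp f2 = MonoidHom.id PG2 := by
  apply PresentedGroup.ext
  intro x
  fin_cases x
  · show g2 (f2 (PresentedGroup.of 0)) = X2
    rw [f2, PresentedGroup.toGroup.of]
    show g2 (Monoid.Coprod.inl (ofAdd (1:ℤ))) = X2
    simp [g2]
  · show g2 (f2 (PresentedGroup.of 1)) = Y2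
    rw [f2, PresentedGroup.toGroup.of]
    show g2 (Monoid.Coprod.inr (ofAdd (1:ZMod 2)) * Monoid.Coprod.inl (ofAdd (1:ℤ))) = Y2
    rw [map_mul]
    simp only [g2, Monoid.Coprod.lift_apply_inl, Monoid.Coprod.lift_apply_inr]
    rw [zmod2Hom_apply_one]
    simpa using zx_eq_y

lemma f2_comp_g2 : f2.comp g2 = MonoidHom.id Q := by
  apply Monoid.Coprod.hom_ext
  · apply MonoidHom.ext_mint
    show f2 (g2 (Monoid.Coprod.inl (ofAdd (1:ℤ)))) = _
    simp only [g2, Monoid.Coprod.lift_apply_inl]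
    simp [f2, PresentedGroup.toGroup.of, fC]
  · apply z2hom_ext
    show f2 (g2 (Monoid.Coprod.inr (ofAdd (1:ZMod 2)))) = _
    simp only [g2, Monoid.Coprod.lift_apply_inr]
    rw [zmod2Hom_apply_one]
    show f2 (X2 * Y2⁻¹) = _
    rw [map_mul, map_inv, f2, PresentedGroup.toGroup.of, PresentedGroup.toGroup.of]
    show fC 0 * (fC 1)⁻¹ = _
    simp only [fC]
    set A : Q := Monoid.Coprod.inl (ofAdd (1:ℤ))
    set B : Q := Monoid.Coprod.inr (ofAdd (1:ZMod 2))
    show A * (B * A)⁻¹ = _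
    have hB : B⁻¹ = B := by
      rw [inv_eq_iff_mul_eq_one, ← pow_two]; exact inr_sq
    calc A * (B * A)⁻¹ = B⁻¹ := by group
      _ = B := hB

noncomputable def e2 : PG2 ≃* Q := MonoidHom.toMulEquiv f2 g2 g2_comp_f2 f2_comp_g2

-- Part 3: Q is not commutative
def s3 : Equiv.Perm (Fin 3) := Equiv.swap 0 1
def t3 : Equiv.Perm (Fin 3) := Equiv.swap 1 2

lemma t3_sq : t3 ^ 2 = 1 := by decide

def Ftest : Q →* Equiv.Perm (Fin 3) :=
  Monoid.Coprod.lift (zpowersHom _ s3) (zmod2Hom t3 t3_sq)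

lemma q_not_comm : ¬ (Monoid.Coprod.inl (ofAdd (1:ℤ)) * Monoid.Coprod.inr (ofAdd (1:ZMod 2)) : Q)
    = Monoid.Coprod.inr (ofAdd (1:ZMod 2)) * Monoid.Coprod.inl (ofAdd (1:ℤ)) := by
  intro h
  have := congrArg Ftest h
  rw [map_mul, map_mul] at this
  simp only [Ftest, Monoid.Coprod.lift_apply_inl, Monoid.Coprod.lift_apply_inr] at this
  rw [zmod2Hom_apply_one] at this
  simp only [zpowersHom_apply] at this
  have hs : s3 ^ toAdd (ofAdd (1:ℤ)) = s3 := by simp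
  rw [hs] at this
  exact absurd this (by decide)

end stmt11aux

/-- `⟨x, y | xy = yx, y² = 1⟩ ≅ ℤ × ℤ/2` while `⟨x, y | xy⁻¹ = yx⁻¹⟩ ≅ ℤ * ℤ/2`
(free product); in particular the two presented groups are not isomorphic. -/
theorem stmt_11 :
    Nonempty (PresentedGroup hopfW1Rels ≃* (Multiplicative ℤ × Multiplicative (ZMod 2))) ∧
    Nonempty (PresentedGroup hopfCoreRels ≃*
      Monoid.Coprod (Multiplicative ℤ) (Multiplicative (ZMod 2))) ∧
    IsEmpty (PresentedGroup hopfW1Rels ≃* PresentedGroup hopfCoreRels) := by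
  refine ⟨⟨stmt11aux.e1⟩, ⟨stmt11aux.e2⟩, ⟨fun e => ?_⟩⟩
  have c : stmt11aux.P ≃* stmt11aux.Q :=
    stmt11aux.e1.symm.trans (e.trans stmt11aux.e2)
  apply stmt11aux.q_not_comm
  obtain ⟨p, hp⟩ := c.surjective (Monoid.Coprod.inl (ofAdd (1:ℤ)))
  obtain ⟨q, hq⟩ := c.surjective (Monoid.Coprod.inr (ofAdd (1:ZMod 2)))
  rw [← hp, ← hq, ← map_mul, ← map_mul, mul_comm]
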